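/- Let S be a strongly admissible additive subsemigroup of ℤ^n × ℤ with Δ(S) ⊆ ℝ^n_{≥0}. If K is a compact subset of Δ(S)^ess, then there exists k₀ ≥ 1 such that K ⊆ Conv(S^{k!})^ess for every integer k ≥ k₀. -/
import Mathlib


open Set

noncomputable section

/-- The embedding of the lattice `ℤ^n × ℤ` into `ℝ^n × ℝ`. -/
def latticeEmbed {n : ℕ} (x : (Fin n → ℤ) × ℤ) : (Fin n → ℝ) × ℝ :=
  (fun i => (x.1 i : ℝ), (x.2 : ℝ))

/-- The set of all finite nonnegative linear combinations of elements of `T`. -/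
def coneCombos {E : Type*} [AddCommMonoid E] [Module ℝ E] (T : Set E) : Set E :=
  {x | ∃ (k : ℕ) (c : Fin k → ℝ) (t : Fin k → E),
    (∀ i, 0 ≤ c i) ∧ (∀ i, t i ∈ T) ∧ x = ∑ i, c i • t i}

/-- `C(T)`: the closed convex cone generated by `T`. -/
def closedConeHull {E : Type*} [AddCommMonoid E] [Module ℝ E] [TopologicalSpace E]
    (T : Set E) : Set E :=
  closure (coneCombos T)

/-- The closed convex cone `C(S) ⊆ ℝ^{n+1}` generated by a subset `S ⊆ ℤ^n × ℤ`. -/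
def coneOf {n : ℕ} (S : Set ((Fin n → ℤ) × ℤ)) : Set ((Fin n → ℝ) × ℝ) :=
  closedConeHull (latticeEmbed '' S)

/-- The Okounkov convex set `Δ(S) = π(C(S) ∩ (ℝ^n × {1}))`. -/
def okounkovSet {n : ℕ} (S : Set ((Fin n → ℤ) × ℤ)) : Set (Fin n → ℝ) :=
  Prod.fst '' (coneOf S ∩ {x | x.2 = 1})

/-- `S^k = {α ∈ ℝ^n : kα ∈ ℤ^n and (kα, k) ∈ S}`. -/
def Spow {n : ℕ} (S : Set ((Fin n → ℤ) × ℤ)) (k : ℕ) : Set (Fin n → ℝ) :=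
  {α | ∃ β : Fin n → ℤ, (∀ i, (β i : ℝ) = (k : ℝ) * α i) ∧ (β, (k : ℤ)) ∈ S}


/-- `Conv(S^k)`: the closed convex hull of `S^k` in `ℝ^n`. -/
def convSpow {n : ℕ} (S : Set ((Fin n → ℤ) × ℤ)) (k : ℕ) : Set (Fin n → ℝ) :=
  closure (convexHull ℝ (Spow S k))

/-- The nonnegative orthant `ℝ^n_{≥0}`. -/
def nonnegOrthant (n : ℕ) : Set (Fin n → ℝ) := {x | ∀ i, 0 ≤ x i}

/-- The essential part `A^ess` of a set `A ⊆ ℝ^n_{≥0}`: the interior of `A` in the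
subspace topology of `ℝ^n_{≥0}`, viewed as a subset of `ℝ^n`. -/
def essSet {n : ℕ} (A : Set (Fin n → ℝ)) : Set (Fin n → ℝ) :=
  {x | x ∈ A ∧ ∃ U : Set (Fin n → ℝ), IsOpen U ∧ x ∈ U ∧ U ∩ nonnegOrthant n ⊆ A}

/-- The essential Okounkov body `Δ(S)^ess = ⋃_{k ≥ 1} Conv(S^k)^ess`. -/
def essOkounkov {n : ℕ} (S : Set ((Fin n → ℤ) × ℤ)) : Set (Fin n → ℝ) :=
  ⋃ k : ℕ, ⋃ (_ : 1 ≤ k), essSet (convSpow S k)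


lemma aux_nsmul_mem {n : ℕ} {S : Set ((Fin n → ℤ) × ℤ)}
    (hsemi : ∀ a ∈ S, ∀ b ∈ S, a + b ∈ S) {a : (Fin n → ℤ) × ℤ} (ha : a ∈ S) :
    ∀ d : ℕ, 1 ≤ d → d • a ∈ S := by
  intro d
  induction d with
  | zero => intro h; omega
  | succ m ih =>
    intro _
    rcases Nat.eq_zero_or_pos m with rfl | hm
    · simpa using ha
    · rw [succ_nsmul]
      exact hsemi _ (ih hm) _ ha

lemma aux_Spow_mono {n : ℕ} {S : Set ((Fin n → ℤ) × ℤ)}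
    (hsemi : ∀ a ∈ S, ∀ b ∈ S, a + b ∈ S) {k m : ℕ} (hk : 1 ≤ k) (hdvd : k ∣ m)
    (hm : 1 ≤ m) : Spow S k ⊆ Spow S m := by
  rintro α ⟨β, hβ, hmem⟩
  obtain ⟨d, rfl⟩ := hdvd
  have hd : 1 ≤ d := by
    rcases Nat.eq_zero_or_pos d with rfl | h
    · omega
    · exact h
  refine ⟨d • β, ?_, ?_⟩
  · intro i
    rw [Pi.smul_apply, nsmul_eq_mul]
    push_cast
    rw [hβ i]
    ring
  · have := aux_nsmul_mem hsemi hmem d hd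
    have heq : d • (β, (k : ℤ)) = (d • β, ((k * d : ℕ) : ℤ)) := by
      ext <;> simp [Prod.smul_def] <;> push_cast <;> ring
    rwa [heq] at this

lemma aux_Spow_subset_okounkov {n : ℕ} (S : Set ((Fin n → ℤ) × ℤ)) {k : ℕ}
    (hk : 1 ≤ k) : Spow S k ⊆ okounkovSet S := by
  rintro α ⟨β, hβ, hmem⟩
  have hk0 : (k : ℝ) ≠ 0 := by positivity
  refine ⟨(α, 1), ⟨?_, rfl⟩, rfl⟩
  apply subset_closure
  refine ⟨1, fun _ => (k : ℝ)⁻¹, fun _ => latticeEmbed (β, (k : ℤ)), ?_, ?_, ?_⟩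
  · intro i; positivity
  · intro i; exact ⟨(β, (k : ℤ)), hmem, rfl⟩
  · simp only [Fin.sum_univ_one]
    ext
    · simp only [latticeEmbed, Prod.smul_fst, Pi.smul_apply, smul_eq_mul]
      rw [hβ _]
      field_simp
    · simp only [latticeEmbed, Prod.smul_snd, smul_eq_mul]
      push_cast
      field_simp

lemma aux_orthant_closed (n : ℕ) : IsClosed (nonnegOrthant n) := by
  have : nonnegOrthant n = ⋂ i : Fin n, (fun x : Fin n → ℝ => x i) ⁻¹' Set.Ici 0 := by
    ext x; simp [nonnegOrthant]
  rw [this]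
  exact isClosed_iInter fun i => IsClosed.preimage (continuous_apply i) isClosed_Ici

lemma aux_orthant_convex (n : ℕ) : Convex ℝ (nonnegOrthant n) := by
  intro x hx y hy a b ha hb hab i
  have := hx i; have := hy i
  have : 0 ≤ a * x i + b * y i := by positivity
  simpa using this

lemma aux_convSpow_orthant {n : ℕ} {S : Set ((Fin n → ℤ) × ℤ)}
    (horth : okounkovSet S ⊆ nonnegOrthant n) {k : ℕ} (hk : 1 ≤ k) :
    convSpow S k ⊆ nonnegOrthant n := by
  apply closure_minimal _ (aux_orthant_closed n)
  apply convexHull_min _ (aux_orthant_convex n)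
  exact fun x hx => horth (aux_Spow_subset_okounkov S hk hx)

/-- For a strongly admissible additive subsemigroup `S ⊆ ℤ^n × ℤ` with
`Δ(S) ⊆ ℝ^n_{≥0}` and a compact subset `K ⊆ Δ(S)^ess`, there exists `k₀ ≥ 1` such that
`K ⊆ Conv(S^{k!})^ess` for every `k ≥ k₀`. -/
theorem compact_subset_essSet_convSpow_factorial (n : ℕ) (hn : 1 ≤ n)
    (S : Set ((Fin n → ℤ) × ℤ))
    (hsemi : ∀ a ∈ S, ∀ b ∈ S, a + b ∈ S)
    (hadm : ∀ a ∈ S, 0 ≤ a.2)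
    (hstrong : coneOf S ∩ {x | x.2 = 0} = {0})
    (horth : okounkovSet S ⊆ nonnegOrthant n)
    (K : Set (Fin n → ℝ)) (hK : IsCompact K)
    (hKsub : K ⊆ essOkounkov S) :
    ∃ k₀ : ℕ, 1 ≤ k₀ ∧ ∀ k : ℕ, k₀ ≤ k → K ⊆ essSet (convSpow S (Nat.factorial k)) := by
  classical
  -- every point of K lies in the orthant
  have hKorth : ∀ y ∈ K, y ∈ nonnegOrthant n := by
    intro y hy
    obtain ⟨m, hm⟩ := mem_iUnion.mp (hKsub hy)
    obtain ⟨hm1, hmem⟩ := mem_iUnion.mp hm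
    exact aux_convSpow_orthant horth hm1 hmem.1
  have H : ∀ x : K, ∃ m : ℕ, 1 ≤ m ∧ (x : Fin n → ℝ) ∈ convSpow S m ∧
      ∃ U : Set (Fin n → ℝ), IsOpen U ∧ (x : Fin n → ℝ) ∈ U ∧
        U ∩ nonnegOrthant n ⊆ convSpow S m := by
    rintro ⟨x, hx⟩
    obtain ⟨m, hm⟩ := mem_iUnion.mp (hKsub hx)
    obtain ⟨hm1, hxA, U, hU, hxU, hUsub⟩ := mem_iUnion.mp hm
    exact ⟨m, hm1, hxA, U, hU, hxU, hUsub⟩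
  choose m hm1 hmA U hUopen hxU hUsub using H
  have hcover : K ⊆ ⋃ x : K, U x := by
    intro y hy
    exact mem_iUnion.mpr ⟨⟨y, hy⟩, hxU ⟨y, hy⟩⟩
  obtain ⟨t, ht⟩ := hK.elim_finite_subcover U hUopen hcover
  refine ⟨max 1 (t.sup m), le_max_left _ _, ?_⟩
  intro k hk y hy
  have hyt := ht hy
  simp only [mem_iUnion] at hyt
  obtain ⟨x, hxt, hyU⟩ := hyt
  have hmx : m x ≤ k := le_trans (le_trans (Finset.le_sup hxt) (le_max_right _ _)) hk
  have hk1 : 1 ≤ k := le_trans (le_max_left _ _) hk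
  have hdvd : m x ∣ Nat.factorial k := Nat.dvd_factorial (hm1 x) hmx
  have hsub : convSpow S (m x) ⊆ convSpow S (Nat.factorial k) :=
    closure_mono (convexHull_mono (aux_Spow_mono hsemi (hm1 x) hdvd k.factorial_pos))
  have hyA : y ∈ convSpow S (m x) := hUsub x ⟨hyU, hKorth y hy⟩
  exact ⟨hsub hyA, U x, hUopen x, hyU, fun z hz => hsub (hUsub x hz)⟩
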